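/- Let G = (V, E) be a connected graph with a linear order < on E. Then the generating function for connected spanning subgraphs, S(G, y) = Σ_{A ⊆ E, (V,A) connected} y^{|A|}, satisfies S(G, y) = y^{|V|−1} Σ_{T spanning tree of G} (1 + y)^{e(T)}, where e(T) is the number of externally active edges of T. -/

import Mathlib

open Finset

attribute [local instance] Classical.propDecidable

/-- A multigraph on vertex type `V` with edge index type `E` is given by a map
`ends : E → Sym2 V` (loops and parallel edges are allowed).  For an edge subset
`A ⊆ E`, `edgeGraph ends A` is the simple graph on `V` whose adjacency is
witnessed by some edge of `A`; it determines the connected components of the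
spanning subgraph `(V, A)`. -/
def edgeGraph {V E : Type} (ends : E → Sym2 V) (A : Finset E) : SimpleGraph V where
  Adj a b := a ≠ b ∧ ∃ e ∈ A, ends e = s(a, b)
  symm := ⟨by
    rintro a b ⟨hab, e, he, hs⟩
    exact ⟨Ne.symm hab, e, he, by rw [hs, Sym2.eq_swap]⟩⟩
  loopless := ⟨by rintro a ⟨h, -⟩; exact h rfl⟩

/-- `kc ends A` is the number of connected components of the spanning subgraph `(V, A)`. -/
noncomputable def kc {V E : Type} (ends : E → Sym2 V) (A : Finset E) : ℕ :=
  Nat.card (edgeGraph ends A).ConnectedComponent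

/-- `(V, A)` is a spanning forest of `(V, E)`: it is a forest
(`|A| + k((V,A)) = |V|`, which rules out loops, parallel edges and cycles)
with as many connected components as the whole graph. -/
def IsSpanningForest {V E : Type} [Fintype V] [Fintype E] (ends : E → Sym2 V)
    (A : Finset E) : Prop :=
  A.card + kc ends A = Fintype.card V ∧ kc ends A = kc ends Finset.univ

/-- `F - e + f`. -/
def swapEdge {E : Type} [DecidableEq E] (A : Finset E) (e f : E) : Finset E :=
  insert f (A.erase e)

/-- `e` is internally active in the spanning forest `(V, A)`. -/
def InternallyActive {V E : Type} [Fintype V] [Fintype E] [DecidableEq E] [LinearOrder E]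
    (ends : E → Sym2 V) (A : Finset E) (e : E) : Prop :=
  e ∈ A ∧ ¬ ∃ f, f ∉ A ∧ e < f ∧ IsSpanningForest ends (swapEdge A e f)

/-- `f` is externally active in the spanning forest `(V, A)`. -/
def ExternallyActive {V E : Type} [Fintype V] [Fintype E] [DecidableEq E] [LinearOrder E]
    (ends : E → Sym2 V) (A : Finset E) (f : E) : Prop :=
  f ∉ A ∧ ¬ ∃ e, e ∈ A ∧ f < e ∧ IsSpanningForest ends (swapEdge A e f)

/-- The set `E_i(F)` of internally active edges of the spanning forest `F = (V, A)`. -/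
noncomputable def intAct {V E : Type} [Fintype V] [Fintype E] [DecidableEq E] [LinearOrder E]
    (ends : E → Sym2 V) (A : Finset E) : Finset E :=
  Finset.univ.filter (InternallyActive ends A)

/-- The set `E_e(F)` of externally active edges of the spanning forest `F = (V, A)`. -/
noncomputable def extAct {V E : Type} [Fintype V] [Fintype E] [DecidableEq E] [LinearOrder E]
    (ends : E → Sym2 V) (A : Finset E) : Finset E :=
  Finset.univ.filter (ExternallyActive ends A)

section Aux
open SimpleGraph
variable {V E : Type} [Fintype V] [DecidableEq E] {ends : E → Sym2 V}

def conn2 (G : SimpleGraph V) (s : Sym2 V) : Prop :=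
  Sym2.lift ⟨fun a b => G.Reachable a b, fun a b => propext ⟨Reachable.symm, Reachable.symm⟩⟩ s

@[simp] lemma conn2_mk {G : SimpleGraph V} {a b : V} : conn2 G s(a, b) ↔ G.Reachable a b :=
  Iff.rfl

lemma sym2_exists (s : Sym2 V) : ∃ a b, s = s(a, b) := by
  induction s using Sym2.ind with
  | _ a b => exact ⟨a, b, rfl⟩

lemma edgeGraph_mono {A B : Finset E} (h : A ⊆ B) : edgeGraph ends A ≤ edgeGraph ends B := by
  rintro a b ⟨hab, e, he, hs⟩
  exact ⟨hab, e, h he, hs⟩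

lemma reach_mono {A B : Finset E} (h : A ⊆ B) {u v : V}
    (hr : (edgeGraph ends A).Reachable u v) : (edgeGraph ends B).Reachable u v :=
  hr.mono (edgeGraph_mono h)

lemma conn2_mono {A B : Finset E} (h : A ⊆ B) {s : Sym2 V}
    (hc : conn2 (edgeGraph ends A) s) : conn2 (edgeGraph ends B) s := by
  induction s using Sym2.ind with
  | _ a b => exact reach_mono h hc

instance (G : SimpleGraph V) : Finite G.ConnectedComponent :=
  Finite.of_surjective G.connectedComponentMk Quot.mk_surjective

lemma reach_insert {A : Finset E} {e : E} {u v : V}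
    (h : (edgeGraph ends (insert e A)).Reachable u v) :
    (edgeGraph ends A).Reachable u v ∨
      ∃ a b, ends e = s(a, b) ∧ (edgeGraph ends A).Reachable u a ∧
        (edgeGraph ends A).Reachable b v := by
  obtain ⟨w⟩ := h
  induction w with
  | nil => exact Or.inl (Reachable.refl _)
  | @cons u x v hadj p ih =>
    obtain ⟨hne, f, hf, hsf⟩ := hadj
    rcases Finset.mem_insert.mp hf with rfl | hfA
    · -- f = e, ends e = s(u, x)
      rcases ih with h1 | ⟨a, b, hs, h1, h2⟩
      · exact Or.inr ⟨u, x, hsf, Reachable.refl _, h1⟩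
      · rw [hsf] at hs
        rcases Sym2.eq_iff.mp hs with ⟨rfl, rfl⟩ | ⟨rfl, rfl⟩
        · exact Or.inr ⟨u, x, hsf, Reachable.refl _, h2⟩
        · exact Or.inl h2
    · have hux : (edgeGraph ends A).Reachable u x := Adj.reachable ⟨hne, f, hfA, hsf⟩
      rcases ih with h1 | ⟨a, b, hs, h1, h2⟩
      · exact Or.inl (hux.trans h1)
      · exact Or.inr ⟨a, b, hs, hux.trans h1, h2⟩

lemma reach_insert_iff {A : Finset E} {e : E}
    (hc : conn2 (edgeGraph ends A) (ends e)) {u v : V} :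
    (edgeGraph ends (insert e A)).Reachable u v ↔ (edgeGraph ends A).Reachable u v := by
  constructor
  · intro h
    rcases reach_insert h with h1 | ⟨a, b, hs, h1, h2⟩
    · exact h1
    · rw [hs] at hc
      exact (h1.trans (conn2_mk.mp hc)).trans h2
  · exact reach_mono (Finset.subset_insert e A)

/-- If `A ⊆ B` and reachability in `B` implies reachability in `A`, then `kc` agree. -/
lemma kc_eq_of_reach {A B : Finset E} (hAB : A ⊆ B)
    (h : ∀ u v : V, (edgeGraph ends B).Reachable u v → (edgeGraph ends A).Reachable u v) :
    kc ends B = kc ends A := by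
  have hbij : Function.Bijective
      (ConnectedComponent.map (Hom.ofLE (edgeGraph_mono (ends := ends) hAB))) := by
    constructor
    · intro c₁ c₂ hc
      obtain ⟨u⟩ := c₁
      obtain ⟨v⟩ := c₂
      exact ConnectedComponent.sound (h u v (ConnectedComponent.exact hc))
    · intro c
      obtain ⟨v⟩ := c
      exact ⟨(edgeGraph ends A).connectedComponentMk v, rfl⟩
  exact (Nat.card_eq_of_bijective _ hbij).symm

lemma kc_le_of_subset {A B : Finset E} (hAB : A ⊆ B) : kc ends B ≤ kc ends A :=
  Nat.card_le_card_of_surjective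
    (ConnectedComponent.map (Hom.ofLE (edgeGraph_mono (ends := ends) hAB)))
    (fun c => by obtain ⟨v⟩ := c; exact ⟨(edgeGraph ends A).connectedComponentMk v, rfl⟩)

lemma kc_insert_of_conn2 {A : Finset E} {e : E}
    (hc : conn2 (edgeGraph ends A) (ends e)) : kc ends (insert e A) = kc ends A :=
  kc_eq_of_reach (Finset.subset_insert e A) (fun _ _ h => (reach_insert_iff hc).mp h)

lemma kc_insert_lt {A : Finset E} {e : E}
    (hc : ¬ conn2 (edgeGraph ends A) (ends e)) : kc ends (insert e A) < kc ends A := by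
  obtain ⟨a, b, hs⟩ := sym2_exists (ends e)
  rw [hs] at hc
  have hnr : ¬ (edgeGraph ends A).Reachable a b := hc
  have hne : a ≠ b := by rintro rfl; exact hnr (Reachable.refl a)
  have hadj : (edgeGraph ends (insert e A)).Adj a b :=
    ⟨hne, e, Finset.mem_insert_self e A, hs⟩
  classical
  haveI : Fintype (edgeGraph ends A).ConnectedComponent := Fintype.ofFinite _
  haveI : Fintype (edgeGraph ends (insert e A)).ConnectedComponent := Fintype.ofFinite _
  rw [kc, kc, Nat.card_eq_fintype_card, Nat.card_eq_fintype_card]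
  apply Fintype.card_lt_of_surjective_not_injective
    (ConnectedComponent.map (Hom.ofLE
      (edgeGraph_mono (ends := ends) (Finset.subset_insert e A))))
  · intro c
    obtain ⟨v⟩ := c
    exact ⟨(edgeGraph ends A).connectedComponentMk v, rfl⟩
  · intro hinj
    have h1 : (edgeGraph ends A).connectedComponentMk a =
        (edgeGraph ends A).connectedComponentMk b := by
      apply hinj
      simpa only [ConnectedComponent.map_mk, Hom.ofLE_apply] using ConnectedComponent.sound hadj.reachable
    exact hnr (ConnectedComponent.exact h1)

lemma kc_le_insert {A : Finset E} {e : E} :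
    kc ends A ≤ kc ends (insert e A) + 1 := by
  by_cases hc : conn2 (edgeGraph ends A) (ends e)
  · rw [kc_insert_of_conn2 hc]; omega
  obtain ⟨a, b, hs⟩ := sym2_exists (ends e)
  classical
  haveI : Fintype (edgeGraph ends A).ConnectedComponent := Fintype.ofFinite _
  haveI : Fintype (edgeGraph ends (insert e A)).ConnectedComponent := Fintype.ofFinite _
  rw [kc, kc, Nat.card_eq_fintype_card, Nat.card_eq_fintype_card]
  set φ := (ConnectedComponent.map (Hom.ofLE
      (edgeGraph_mono (ends := ends) (Finset.subset_insert e A)))) with hφ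
  have hcard : (Finset.univ.erase ((edgeGraph ends A).connectedComponentMk a)).card + 1 =
      Fintype.card (edgeGraph ends A).ConnectedComponent := by
    rw [Finset.card_erase_add_one (Finset.mem_univ _), Fintype.card]
  rw [← hcard]
  have hinj : Set.InjOn φ
      ↑(Finset.univ.erase ((edgeGraph ends A).connectedComponentMk a)) := by
    intro c₁ hc₁ c₂ hc₂ hcc
    simp only [Finset.coe_erase, Set.mem_diff, Finset.mem_coe, Set.mem_singleton_iff] at hc₁ hc₂
    by_contra hne
    obtain ⟨u⟩ := c₁
    obtain ⟨v⟩ := c₂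
    simp only [hφ, ConnectedComponent.map_mk] at hcc
    have hr : (edgeGraph ends (insert e A)).Reachable u v := ConnectedComponent.exact hcc
    have hnr : ¬ (edgeGraph ends A).Reachable u v := by
      intro h; exact hne (ConnectedComponent.sound h)
    rcases reach_insert hr with h1 | ⟨a', b', hs', h1, h2⟩
    · exact hnr h1
    · rw [hs] at hs'
      rcases Sym2.eq_iff.mp hs' with ⟨rfl, rfl⟩ | ⟨rfl, rfl⟩
      · exact hc₁.2 (ConnectedComponent.sound h1)
      · exact hc₂.2 (ConnectedComponent.sound h2.symm)
  have h2 : (Finset.univ.erase ((edgeGraph ends A).connectedComponentMk a)).card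
      ≤ Fintype.card (edgeGraph ends (insert e A)).ConnectedComponent := by
    rw [Fintype.card, ← Finset.card_image_of_injOn hinj]
    exact Finset.card_le_card (Finset.subset_univ _)
  omega

lemma kc_empty : kc ends (∅ : Finset E) = Fintype.card V := by
  have hbot : edgeGraph ends (∅ : Finset E) = ⊥ := by
    ext a b
    simp [edgeGraph]
  rw [kc, hbot]
  have : Function.Bijective ((⊥ : SimpleGraph V).connectedComponentMk) := by
    constructor
    · intro u v h
      exact reachable_bot.mp (ConnectedComponent.exact h)
    · exact Quot.mk_surjective
  rw [← Nat.card_eq_fintype_card]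
  exact (Nat.card_eq_of_bijective _ this).symm

lemma kc_card_ge (A : Finset E) :
    Fintype.card V ≤ A.card + kc ends A := by
  induction A using Finset.induction_on with
  | empty => rw [kc_empty]; simp
  | @insert e A he ih =>
    rw [Finset.card_insert_of_notMem he]
    have := kc_le_insert (ends := ends) (A := A) (e := e)
    omega

end Aux

section Krus
open SimpleGraph
variable {V E : Type} [Fintype V] [DecidableEq E] [LinearOrder E] {ends : E → Sym2 V}

lemma conn2_iff_of_reach {G G' : SimpleGraph V}
    (h : ∀ u v, G.Reachable u v ↔ G'.Reachable u v) (s : Sym2 V) : conn2 G s ↔ conn2 G' s := by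
  induction s using Sym2.ind with | _ a b => exact h a b

lemma reach_insert_of_cross {A : Finset E} {e : E} {a b u v : V}
    (hs : ends e = s(a, b)) (h1 : (edgeGraph ends A).Reachable u a)
    (h2 : (edgeGraph ends A).Reachable b v) :
    (edgeGraph ends (insert e A)).Reachable u v := by
  have h1' := reach_mono (Finset.subset_insert e A) h1
  have h2' := reach_mono (Finset.subset_insert e A) h2
  by_cases hab : a = b
  · subst hab; exact h1'.trans h2'
  · exact (h1'.trans (SimpleGraph.Adj.reachable
      ⟨hab, e, Finset.mem_insert_self e A, hs⟩)).trans h2'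

lemma reach_insert_congr {A B : Finset E} {e : E}
    (h : ∀ u v : V, (edgeGraph ends A).Reachable u v ↔ (edgeGraph ends B).Reachable u v)
    {u v : V} (hr : (edgeGraph ends (insert e A)).Reachable u v) :
    (edgeGraph ends (insert e B)).Reachable u v := by
  rcases reach_insert hr with h1 | ⟨a, b, hs, h1, h2⟩
  · exact reach_mono (Finset.subset_insert e B) ((h u v).mp h1)
  · exact reach_insert_of_cross hs ((h u a).mp h1) ((h b v).mp h2)

/-- The Kruskal (lexicographically greedy) spanning forest of `A`. -/
noncomputable def krus (ends : E → Sym2 V) (A : Finset E) : Finset E :=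
  A.filter fun e => ¬ conn2 (edgeGraph ends (A.filter (· < e))) (ends e)

lemma krus_subset (A : Finset E) : krus ends A ⊆ A := Finset.filter_subset _ _

lemma filter_filter_lt {A : Finset E} {e c : E} (h : e ≤ c) :
    (A.filter (· < c)).filter (· < e) = A.filter (· < e) := by
  ext x
  simp only [Finset.mem_filter]
  exact ⟨fun ⟨⟨h1, _⟩, h3⟩ => ⟨h1, h3⟩, fun ⟨h1, h2⟩ => ⟨⟨h1, lt_of_lt_of_le h2 h⟩, h2⟩⟩

lemma mem_krus {A : Finset E} {e : E} :
    e ∈ krus ends A ↔ e ∈ A ∧ ¬ conn2 (edgeGraph ends (A.filter (· < e))) (ends e) :=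
  Finset.mem_filter

lemma krus_prefix (A : Finset E) (c : E) :
    krus ends (A.filter (· < c)) = (krus ends A).filter (· < c) := by
  ext e
  simp only [mem_krus, Finset.mem_filter]
  constructor
  · rintro ⟨⟨heA, hec⟩, h⟩
    rw [filter_filter_lt (le_of_lt hec)] at h
    exact ⟨⟨heA, h⟩, hec⟩
  · rintro ⟨⟨heA, h⟩, hec⟩
    rw [filter_filter_lt (le_of_lt hec)]
    exact ⟨⟨heA, hec⟩, h⟩

lemma krus_spec (ends : E → Sym2 V) (A : Finset E) :
    (∀ u v : V, (edgeGraph ends (krus ends A)).Reachable u v ↔ (edgeGraph ends A).Reachable u v)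
    ∧ (krus ends A).card + kc ends (krus ends A) = Fintype.card V := by
  induction A using Finset.strongInduction with
  | _ A ih =>
  by_cases hA : A = ∅
  · subst hA
    have : krus ends (∅ : Finset E) = ∅ := Finset.subset_empty.mp (krus_subset _)
    rw [this]
    exact ⟨fun u v => Iff.rfl, by simpa using kc_empty (ends := ends)⟩
  · have hne : A.Nonempty := Finset.nonempty_iff_ne_empty.mpr hA
    set m := A.max' hne with hm
    have hmem : m ∈ A := A.max'_mem hne
    set A' := A.filter (· < m) with hA'
    have hssub : A' ⊂ A := by
      constructor
      · exact Finset.filter_subset _ _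
      · intro hsub
        have := hsub hmem
        simp only [hA', Finset.mem_filter] at this
        exact absurd this.2 (lt_irrefl m)
    have hins : insert m A' = A := by
      ext x
      simp only [Finset.mem_insert, hA', Finset.mem_filter]
      constructor
      · rintro (rfl | ⟨hx, _⟩) <;> assumption
      · intro hx
        rcases lt_or_eq_of_le (A.le_max' x hx) with h | h
        · exact Or.inr ⟨hx, h⟩
        · exact Or.inl h
    obtain ⟨ihreach, ihcard⟩ := ih A' hssub
    have hkpre : krus ends A' = (krus ends A).filter (· < m) := krus_prefix A m
    have hAfm : A.filter (· < m) = A' := rfl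
    by_cases hc : conn2 (edgeGraph ends A') (ends m)
    · -- m is not taken
      have hmnot : m ∉ krus ends A := by
        rw [mem_krus, hAfm]
        rintro ⟨-, h⟩; exact h hc
      have hkeq : krus ends A = krus ends A' := by
        rw [hkpre]
        ext e
        simp only [Finset.mem_filter]
        refine ⟨fun h => ⟨h, ?_⟩, fun ⟨h, _⟩ => h⟩
        rcases lt_or_eq_of_le (A.le_max' e (krus_subset A h)) with h' | h'
        · exact h'
        · rw [h', ← hm] at h; exact absurd h hmnot
      have hreachA : ∀ u v : V,
          (edgeGraph ends A).Reachable u v ↔ (edgeGraph ends A').Reachable u v := by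
        intro u v
        rw [← hins]
        exact reach_insert_iff hc
      refine ⟨fun u v => ?_, ?_⟩
      · rw [hkeq, hreachA]; exact ihreach u v
      · rw [hkeq]; exact ihcard
    · -- m is taken
      have hmk : m ∈ krus ends A := by
        rw [mem_krus, hAfm]; exact ⟨hmem, hc⟩
      have hkeq : krus ends A = insert m (krus ends A') := by
        rw [hkpre]
        ext e
        simp only [Finset.mem_insert, Finset.mem_filter]
        constructor
        · intro h
          rcases lt_or_eq_of_le (A.le_max' e (krus_subset A h)) with h' | h'
          · exact Or.inr ⟨h, h'⟩
          · exact Or.inl h'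
        · rintro (rfl | ⟨h, -⟩)
          · exact hmk
          · exact h
      have hmnotk : m ∉ krus ends A' := fun h => by
        have := (krus_subset A') h
        simp only [hA', Finset.mem_filter] at this
        exact absurd this.2 (lt_irrefl m)
      have hnc' : ¬ conn2 (edgeGraph ends (krus ends A')) (ends m) := fun h =>
        hc ((conn2_iff_of_reach ihreach (ends m)).mp h)
      have hlt := kc_insert_lt (ends := ends) (A := krus ends A') (e := m) hnc'
      have hle := kc_le_insert (ends := ends) (A := krus ends A') (e := m)
      refine ⟨fun u v => ?_, ?_⟩
      · rw [hkeq, ← hins]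
        exact ⟨reach_insert_congr ihreach, reach_insert_congr (fun u v => (ihreach u v).symm)⟩
      · rw [hkeq, Finset.card_insert_of_notMem hmnotk]
        omega

lemma kc_krus (A : Finset E) : kc ends (krus ends A) = kc ends A := by
  exact (kc_eq_of_reach (krus_subset A)
    (fun u v h => ((krus_spec ends A).1 u v).mpr h)).symm

lemma krus_card (A : Finset E) : (krus ends A).card + kc ends A = Fintype.card V := by
  rw [← kc_krus A]; exact (krus_spec ends A).2

end Krus

section Activity
open SimpleGraph
variable {V E : Type} [Fintype V] [Fintype E] [DecidableEq E] [LinearOrder E] {ends : E → Sym2 V}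

lemma nonempty_of_kc_one {A : Finset E} (h : kc ends A = 1) : Nonempty V := by
  by_contra hV
  haveI : IsEmpty V := not_nonempty_iff.mp hV
  haveI : IsEmpty (edgeGraph ends A).ConnectedComponent := inferInstance
  rw [kc, Nat.card_of_isEmpty] at h
  exact absurd h (by norm_num)

lemma kc_pos (hV : Nonempty V) (A : Finset E) : 0 < kc ends A := by
  haveI : Nonempty (edgeGraph ends A).ConnectedComponent :=
    ⟨(edgeGraph ends A).connectedComponentMk hV.some⟩
  exact Nat.card_pos

lemma reach_of_kc_one {A : Finset E} (h : kc ends A = 1) (u v : V) :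
    (edgeGraph ends A).Reachable u v := by
  rw [kc, Nat.card_eq_one_iff_unique] at h
  haveI := h.1
  exact ConnectedComponent.exact (Subsingleton.elim _ _)

/-- In a forest, removing an edge separates its endpoints. -/
lemma forest_erase {T : Finset E} (hT : T.card + kc ends T = Fintype.card V) {e : E}
    (he : e ∈ T) :
    kc ends (T.erase e) = kc ends T + 1 ∧
      ¬ conn2 (edgeGraph ends (T.erase e)) (ends e) := by
  have hins : insert e (T.erase e) = T := Finset.insert_erase he
  have hcard : (T.erase e).card + 1 = T.card := by
    rw [Finset.card_erase_of_mem he]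
    have : 0 < T.card := Finset.card_pos.mpr ⟨e, he⟩
    omega
  have hge := kc_card_ge (ends := ends) (T.erase e)
  have hle : kc ends (T.erase e) ≤ kc ends (insert e (T.erase e)) + 1 := kc_le_insert
  rw [hins] at hle
  have hkc : kc ends (T.erase e) = kc ends T + 1 := by omega
  refine ⟨hkc, fun hc => ?_⟩
  have := kc_insert_of_conn2 hc
  rw [hins] at this
  omega

/-- Adding redundant edges does not change reachability. -/
lemma reach_union_redundant {B C : Finset E}
    (h : ∀ f ∈ C, conn2 (edgeGraph ends B) (ends f)) {u v : V}
    (hr : (edgeGraph ends (B ∪ C)).Reachable u v) : (edgeGraph ends B).Reachable u v := by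
  induction C using Finset.induction_on with
  | empty => rwa [Finset.union_empty] at hr
  | @insert f C' hf ih =>
    have hBC : B ∪ insert f C' = insert f (B ∪ C') := by
      ext x
      simp only [Finset.mem_union, Finset.mem_insert]
      tauto
    rw [hBC] at hr
    have hcf : conn2 (edgeGraph ends (B ∪ C')) (ends f) :=
      conn2_mono Finset.subset_union_left (h f (Finset.mem_insert_self f C'))
    exact ih (fun g hg => h g (Finset.mem_insert_of_mem hg)) ((reach_insert_iff hcf).mp hr)

lemma conn2_union_redundant {B C : Finset E}
    (h : ∀ f ∈ C, conn2 (edgeGraph ends B) (ends f)) {s : Sym2 V}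
    (hc : conn2 (edgeGraph ends (B ∪ C)) s) : conn2 (edgeGraph ends B) s := by
  induction s using Sym2.ind with
  | _ a b => exact reach_union_redundant h hc

/-- An externally active edge is spanned by the strictly smaller tree edges. -/
lemma extActive_conn (hconn : kc ends (Finset.univ : Finset E) = 1) {T : Finset E}
    (hTc : T.card + kc ends T = Fintype.card V) (hT1 : kc ends T = 1) {f : E}
    (hf : ExternallyActive ends T f) :
    conn2 (edgeGraph ends (T.filter (· < f))) (ends f) := by
  obtain ⟨a, b, hs⟩ := sym2_exists (ends f)
  rw [hs, conn2_mk]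
  by_contra hnr
  set 𝒞 := T.powerset.filter
    (fun B => T.filter (· < f) ⊆ B ∧ ¬ (edgeGraph ends B).Reachable a b) with h𝒞
  have h𝒞ne : 𝒞.Nonempty := by
    refine ⟨T.filter (· < f), ?_⟩
    rw [h𝒞, Finset.mem_filter, Finset.mem_powerset]
    exact ⟨Finset.filter_subset _ _, le_refl _, hnr⟩
  obtain ⟨B, hB𝒞, hBmax⟩ := 𝒞.exists_max_image Finset.card h𝒞ne
  rw [h𝒞, Finset.mem_filter, Finset.mem_powerset] at hB𝒞
  obtain ⟨hBT, hBpre, hBnr⟩ := hB𝒞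
  have hBneT : B ≠ T := by
    rintro rfl
    exact hBnr (reach_of_kc_one hT1 a b)
  obtain ⟨e', he'T, he'B⟩ : ∃ e', e' ∈ T ∧ e' ∉ B := by
    by_contra h
    push_neg at h
    exact hBneT (Finset.Subset.antisymm hBT h)
  have hfe' : f < e' := by
    rcases lt_trichotomy f e' with h | h | h
    · exact h
    · exact absurd (h ▸ he'T) hf.1
    · exact absurd (hBpre (Finset.mem_filter.mpr ⟨he'T, h⟩)) he'B
  have hreachins : (edgeGraph ends (insert e' B)).Reachable a b := by
    by_contra hno
    have hmem : insert e' B ∈ 𝒞 := by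
      rw [h𝒞, Finset.mem_filter, Finset.mem_powerset]
      exact ⟨Finset.insert_subset he'T hBT,
        hBpre.trans (Finset.subset_insert _ _), hno⟩
    have := hBmax _ hmem
    rw [Finset.card_insert_of_notMem he'B] at this
    omega
  rcases reach_insert hreachins with h1 | ⟨c, d, hs', h1, h2⟩
  · exact hBnr h1
  -- a ~ c and d ~ b in B, ends e' = s(c, d)
  have hBsub : B ⊆ T.erase e' := fun x hx =>
    Finset.mem_erase.mpr ⟨fun h => he'B (h ▸ hx), hBT hx⟩
  obtain ⟨hkerase, hncerase⟩ := forest_erase (ends := ends) hTc he'T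
  have hnrab : ¬ (edgeGraph ends (T.erase e')).Reachable a b := by
    intro hr
    apply hncerase
    rw [hs', conn2_mk]
    exact ((reach_mono hBsub h1).symm.trans hr).trans (reach_mono hBsub h2).symm
  -- the swap is a spanning tree
  have hnc2 : ¬ conn2 (edgeGraph ends (T.erase e')) (ends f) := by
    rw [hs, conn2_mk]; exact hnrab
  have hlt := kc_insert_lt (ends := ends) (A := T.erase e') (e := f) hnc2
  have hle := kc_le_insert (ends := ends) (A := T.erase e') (e := f)
  have hkswap : kc ends (swapEdge T e' f) = 1 := by
    rw [swapEdge]; rw [hT1] at hkerase; omega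
  have hfT : f ∉ T.erase e' := fun h => hf.1 (Finset.mem_of_mem_erase h)
  have hcardswap : (swapEdge T e' f).card = T.card := by
    rw [swapEdge, Finset.card_insert_of_notMem hfT, Finset.card_erase_of_mem he'T]
    have : 0 < T.card := Finset.card_pos.mpr ⟨e', he'T⟩
    omega
  have hsf : IsSpanningForest ends (swapEdge T e' f) := by
    constructor
    · rw [hcardswap, hkswap]; omega
    · rw [hkswap, hconn]
  exact hf.2 ⟨e', he'T, hfe', hsf⟩

/-- Edges of a connected `A` outside its Kruskal tree are externally active. -/
lemma extActive_of_not_krus (hconn : kc ends (Finset.univ : Finset E) = 1) {A : Finset E}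
    (hA : kc ends A = 1) {f : E} (hfA : f ∈ A) (hfk : f ∉ krus ends A) :
    ExternallyActive ends (krus ends A) f := by
  refine ⟨hfk, ?_⟩
  rintro ⟨e, heT, hfe, hsf⟩
  -- endpoints of f spanned by smaller krus edges
  have hcf : conn2 (edgeGraph ends ((krus ends A).filter (· < f))) (ends f) := by
    have h1 : conn2 (edgeGraph ends (A.filter (· < f))) (ends f) := by
      rw [mem_krus] at hfk
      by_contra h
      exact hfk ⟨hfA, h⟩
    rw [← krus_prefix]
    exact (conn2_iff_of_reach
      (fun u v => ((krus_spec ends (A.filter (· < f))).1 u v).symm) _).mp h1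
  have hsub : (krus ends A).filter (· < f) ⊆ (krus ends A).erase e := by
    intro x hx
    rw [Finset.mem_filter] at hx
    exact Finset.mem_erase.mpr ⟨fun h => absurd (h ▸ hx.2) (not_lt.mpr (le_of_lt hfe)), hx.1⟩
  have hce : conn2 (edgeGraph ends ((krus ends A).erase e)) (ends f) := conn2_mono hsub hcf
  have hkeq : kc ends (swapEdge (krus ends A) e f) = kc ends ((krus ends A).erase e) := by
    rw [swapEdge]; exact kc_insert_of_conn2 hce
  have hkca := krus_card (ends := ends) A
  rw [hA] at hkca
  have hge := kc_card_ge (ends := ends) ((krus ends A).erase e)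
  have hcarde : ((krus ends A).erase e).card + 1 = (krus ends A).card := by
    rw [Finset.card_erase_of_mem heT]
    have : 0 < (krus ends A).card := Finset.card_pos.mpr ⟨e, heT⟩
    omega
  have h2 : 2 ≤ kc ends ((krus ends A).erase e) := by omega
  rw [hsf.2, hconn] at hkeq
  omega

end Activity

section Main
open SimpleGraph
variable {V E : Type} [Fintype V] [Fintype E] [DecidableEq E] [LinearOrder E] {ends : E → Sym2 V}

lemma krus_union (hconn : kc ends (Finset.univ : Finset E) = 1) {T S : Finset E}
    (hT : IsSpanningForest ends T) (hS : ∀ f ∈ S, ExternallyActive ends T f) :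
    krus ends (T ∪ S) = T := by
  have hT1 : kc ends T = 1 := hT.2.trans hconn
  have hTc := hT.1
  ext e
  rw [mem_krus]
  constructor
  · rintro ⟨heA, hnc⟩
    rcases Finset.mem_union.mp heA with h | h
    · exact h
    · exfalso
      apply hnc
      have h1 := extActive_conn hconn hTc hT1 (hS e h)
      refine conn2_mono (fun x hx => ?_) h1
      rw [Finset.mem_filter] at hx ⊢
      exact ⟨Finset.mem_union_left _ hx.1, hx.2⟩
  · intro heT
    refine ⟨Finset.mem_union_left _ heT, fun hc => ?_⟩
    have hfun : (T ∪ S).filter (· < e) = T.filter (· < e) ∪ S.filter (· < e) :=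
      Finset.filter_union _ _ _
    rw [hfun] at hc
    have hred : ∀ f ∈ S.filter (· < e), conn2 (edgeGraph ends (T.filter (· < e))) (ends f) := by
      intro f hf
      rw [Finset.mem_filter] at hf
      have h1 := extActive_conn hconn hTc hT1 (hS f hf.1)
      refine conn2_mono (fun x hx => ?_) h1
      rw [Finset.mem_filter] at hx ⊢
      exact ⟨hx.1, lt_trans hx.2 hf.2⟩
    have hc2 := conn2_union_redundant hred hc
    have hc3 : conn2 (edgeGraph ends (T.erase e)) (ends e) := by
      refine conn2_mono (fun x hx => ?_) hc2
      rw [Finset.mem_filter] at hx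
      exact Finset.mem_erase.mpr ⟨ne_of_lt hx.2, hx.1⟩
    exact (forest_erase hTc heT).2 hc3

lemma sum_pow_card (y : ℝ) (s : Finset E) :
    (1 + y) ^ s.card = ∑ t ∈ s.powerset, y ^ t.card := by
  calc (1 + y) ^ s.card = ∏ _i ∈ s, (y + 1) := by rw [Finset.prod_const, add_comm]
  _ = ∑ t ∈ s.powerset, (∏ _i ∈ t, y) * ∏ _i ∈ s \ t, 1 := Finset.prod_add _ _ s
  _ = ∑ t ∈ s.powerset, y ^ t.card := by
      refine Finset.sum_congr rfl fun t _ => ?_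
      rw [Finset.prod_const, Finset.prod_const, one_pow, mul_one]

theorem connected_spanning_subgraphs_gen_fun' (ends : E → Sym2 V)
    (hconn : kc ends (Finset.univ : Finset E) = 1) (y : ℝ) :
    ∑ A ∈ Finset.univ.powerset.filter (fun A => kc ends A = 1), y ^ A.card =
      y ^ (Fintype.card V - 1) *
        ∑ T ∈ Finset.univ.powerset.filter (IsSpanningForest ends),
          (1 + y) ^ (extAct ends T).card := by
  have hV : Nonempty V := nonempty_of_kc_one hconn
  have hn : 1 ≤ Fintype.card V := Fintype.card_pos
  -- expand the right-hand side as a double sum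
  have hrhs : y ^ (Fintype.card V - 1) *
      ∑ T ∈ Finset.univ.powerset.filter (IsSpanningForest ends),
        (1 + y) ^ (extAct ends T).card =
      ∑ p ∈ (Finset.univ.powerset.filter (IsSpanningForest ends)).sigma
          (fun T => (extAct ends T).powerset), y ^ (Fintype.card V - 1 + p.2.card) := by
    rw [Finset.mul_sum, Finset.sum_sigma]
    refine Finset.sum_congr rfl fun T _ => ?_
    rw [sum_pow_card, Finset.mul_sum]
    refine Finset.sum_congr rfl fun t _ => ?_
    rw [pow_add]
  rw [hrhs]
  refine Finset.sum_bij' (fun A _ => ⟨krus ends A, A \ krus ends A⟩)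
    (fun p _ => p.1 ∪ p.2) ?_ ?_ ?_ ?_ ?_
  · -- maps into the sigma set
    intro A hA
    rw [Finset.mem_filter] at hA
    have hA1 : kc ends A = 1 := hA.2
    rw [Finset.mem_sigma, Finset.mem_filter, Finset.mem_powerset, Finset.mem_powerset]
    refine ⟨⟨Finset.subset_univ _, (krus_spec ends A).2, ?_⟩, ?_⟩
    · rw [kc_krus, hA1, hconn]
    · intro f hf
      rw [Finset.mem_sdiff] at hf
      rw [extAct, Finset.mem_filter]
      exact ⟨Finset.mem_univ _, extActive_of_not_krus hconn hA1 hf.1 hf.2⟩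
  · -- maps back into the connected set
    intro p hp
    rw [Finset.mem_sigma, Finset.mem_filter, Finset.mem_powerset, Finset.mem_powerset] at hp
    obtain ⟨⟨-, hsf⟩, hS⟩ := hp
    rw [Finset.mem_filter]
    refine ⟨Finset.mem_powerset.mpr (Finset.subset_univ _), ?_⟩
    show kc ends (p.1 ∪ p.2) = 1
    have h1 : kc ends (p.1 ∪ p.2) ≤ 1 := by
      have := kc_le_of_subset (ends := ends) (Finset.subset_union_left (s₁ := p.1) (s₂ := p.2))
      rw [hsf.2, hconn] at this
      exact this
    have h2 : 0 < kc ends (p.1 ∪ p.2) := kc_pos hV _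
    omega
  · -- left inverse
    intro A hA
    exact Finset.union_sdiff_of_subset (krus_subset A)
  · -- right inverse
    intro p hp
    rw [Finset.mem_sigma, Finset.mem_filter, Finset.mem_powerset, Finset.mem_powerset] at hp
    obtain ⟨⟨-, hsf⟩, hS⟩ := hp
    obtain ⟨T, S⟩ := p
    simp only at hsf hS ⊢
    have hSext : ∀ f ∈ S, ExternallyActive ends T f := by
      intro f hf
      have := hS hf
      rw [extAct, Finset.mem_filter] at this
      exact this.2
    have h1 : krus ends (T ∪ S) = T := krus_union hconn hsf hSext
    have h2 : (T ∪ S) \ T = S := by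
      rw [Finset.union_sdiff_left]
      refine Finset.sdiff_eq_self_of_disjoint ?_
      rw [Finset.disjoint_left]
      exact fun f hf hfT => (hSext f hf).1 hfT
    rw [h1, h2]
  · -- the summands agree
    intro A hA
    rw [Finset.mem_filter] at hA
    have hA1 : kc ends A = 1 := hA.2
    have hkc := krus_card (ends := ends) A
    rw [hA1] at hkc
    have hcard : (A \ krus ends A).card + (krus ends A).card = A.card :=
      Finset.card_sdiff_add_card_eq_card (krus_subset A)
    show y ^ A.card = y ^ (Fintype.card V - 1 + (A \ krus ends A).card)
    congr 1
    omega

end Main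

/-- For a connected graph, the generating function of connected
spanning subgraphs satisfies `S(G, y) = y^{|V|−1} ∑_{T spanning tree} (1 + y)^{e(T)}`. -/
theorem connected_spanning_subgraphs_gen_fun {V E : Type} [Fintype V] [Fintype E]
    [DecidableEq E] [LinearOrder E] (ends : E → Sym2 V)
    (hconn : kc ends (Finset.univ : Finset E) = 1) (y : ℝ) :
    ∑ A ∈ Finset.univ.powerset.filter (fun A => kc ends A = 1), y ^ A.card =
      y ^ (Fintype.card V - 1) *
        ∑ T ∈ Finset.univ.powerset.filter (IsSpanningForest ends),
          (1 + y) ^ (extAct ends T).card := by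
  exact connected_spanning_subgraphs_gen_fun' ends hconn y
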